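/- Let f : ℝⁿ → ℝ be C^1 on a neighbourhood V of x̄, let x̄ be a local minimum of f, and let Σ ⊆ ℝⁿ be a set containing all critical points of f in V. Suppose there exist positive constants c and δ such that ‖∇f(x)‖ ≥ c · dist(x, Σ)^{r−1} for all x with ‖x − x̄‖ ≤ δ. Then there exist positive constants c' and δ' such that f(x) − f(x̄) ≥ c' · dist(x, Σ)^r for all x with ‖x − x̄‖ ≤ δ'. -/

import Mathlib

open Filter Metric Set Topology
open scoped RealInnerProductSpace

lemma aux_norm_gradient_le {n : ℕ} {f : EuclideanSpace ℝ (Fin n) → ℝ}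
    {y : EuclideanSpace ℝ (Fin n)} {κ ρ : ℝ} (hκ : 0 < κ)
    (hdf : DifferentiableAt ℝ f y) (hρ : 0 < ρ)
    (hmin : ∀ z ∈ Metric.ball y ρ, f y ≤ f z + κ * ‖z - y‖) :
    ‖gradient f y‖ ≤ κ := by
  by_cases hg : gradient f y = 0
  · simp [hg, hκ.le]
  set g := gradient f y with hgdef
  have hgn : 0 < ‖g‖ := norm_pos_iff.mpr hg
  set v : EuclideanSpace ℝ (Fin n) := -(‖g‖⁻¹ • g) with hv
  have hvnorm : ‖v‖ = 1 := by
    rw [hv, norm_neg, norm_smul, norm_inv, norm_norm, inv_mul_cancel₀ hgn.ne']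
  have hinner : ⟪g, v⟫ = -‖g‖ := by
    rw [hv, inner_neg_right, real_inner_smul_right, real_inner_self_eq_norm_sq]
    field_simp
  have hcurve : HasDerivAt (fun t : ℝ => y + t • v) v 0 := by
    simpa using ((hasDerivAt_id (0:ℝ)).smul_const v).const_add y
  have hfd : fderiv ℝ f y v = ⟪g, v⟫ := by
    rw [hgdef]
    simp [gradient]
  have hφ : HasDerivAt (fun t : ℝ => f (y + t • v)) (-‖g‖) 0 := by
    have hdf' : HasFDerivAt f (fderiv ℝ f y) (y + (0:ℝ) • v) := by
      simpa using hdf.hasFDerivAt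
    have := hdf'.comp_hasDerivAt 0 hcurve
    rw [← hinner, ← hfd]
    exact this
  set φ : ℝ → ℝ := fun t => f (y + t • v) with hφdef
  have hslope : Filter.Tendsto (slope φ 0) (𝓝[>] 0) (𝓝 (-‖g‖)) :=
    ((hasDerivAt_iff_tendsto_slope.mp hφ).mono_left
      (nhdsWithin_mono 0 fun t ht => ne_of_gt ht))
  have hev : ∀ᶠ t in 𝓝[>] (0:ℝ), -κ ≤ slope φ 0 t := by
    filter_upwards [Ioo_mem_nhdsGT_of_mem (Set.left_mem_Ico.mpr hρ)] with t ht
    have ht0 : 0 < t := ht.1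
    have hz : y + t • v ∈ Metric.ball y ρ := by
      rw [Metric.mem_ball, dist_eq_norm]
      simp only [add_sub_cancel_left, norm_smul, Real.norm_eq_abs, abs_of_pos ht0, hvnorm]
      simpa using ht.2
    have h1 := hmin _ hz
    have h2 : ‖(y + t • v) - y‖ = t := by
      simp only [add_sub_cancel_left, norm_smul, Real.norm_eq_abs, abs_of_pos ht0, hvnorm]
      ring
    rw [h2] at h1
    have hφ0 : φ 0 = f y := by simp [hφdef]
    have hφt : φ t = f (y + t • v) := rfl
    rw [slope_def_field, sub_zero, le_div_iff₀ ht0]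
    rw [hφ0]
    nlinarith [h1]
  have := ge_of_tendsto hslope hev
  linarith [this]

set_option maxHeartbeats 1000000 in
theorem stmt_3 {n : ℕ} (r : ℕ) (hr : 1 ≤ r) (f : EuclideanSpace ℝ (Fin n) → ℝ)
    (xbar : EuclideanSpace ℝ (Fin n)) (V S : Set (EuclideanSpace ℝ (Fin n)))
    (hV : IsOpen V) (hx : xbar ∈ V) (hf : ContDiffOn ℝ 1 f V)
    (hmin : IsLocalMin f xbar)
    (hcrit : {x ∈ V | gradient f x = 0} ⊆ S)
    (c δ : ℝ) (hc : 0 < c) (hδ : 0 < δ)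
    (hgrad : ∀ x ∈ Metric.closedBall xbar δ,
      c * Metric.infDist x S ^ (r - 1) ≤ ‖gradient f x‖) :
    ∃ c' > (0 : ℝ), ∃ δ' > (0 : ℝ), ∀ x ∈ Metric.closedBall xbar δ',
      c' * Metric.infDist x S ^ r ≤ f x - f xbar := by
  -- differentiability on V
  have hdiff : ∀ z ∈ V, DifferentiableAt ℝ f z := fun z hz =>
    ((hf.differentiableOn one_ne_zero) z hz).differentiableAt (hV.mem_nhds hz)
  -- xbar is a critical point, hence in S
  have hxS : xbar ∈ S := by
    apply hcrit
    refine ⟨hx, ?_⟩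
    rw [gradient, hmin.fderiv_eq_zero, map_zero]
  -- a radius ρ > 0 with closedBall xbar ρ ⊆ V, ⊆ {f xbar ≤ f ·}, and ρ ≤ δ
  obtain ⟨ε, hε, hεsub⟩ := Metric.mem_nhds_iff.mp (Filter.inter_mem (hV.mem_nhds hx) hmin)
  set ρ : ℝ := min (ε / 2) δ with hρdef
  have hρ : 0 < ρ := lt_min (by linarith) hδ
  have hρδ : ρ ≤ δ := min_le_right _ _
  have hBsub : ∀ z, dist z xbar ≤ ρ → z ∈ V ∧ f xbar ≤ f z := by
    intro z hz
    have : z ∈ Metric.ball xbar ε := by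
      rw [Metric.mem_ball]
      calc dist z xbar ≤ ρ := hz
        _ ≤ ε / 2 := min_le_left _ _
        _ < ε := by linarith
    exact hεsub this
  refine ⟨c / 2 ^ (r + 1), by positivity, ρ / 2, by positivity, ?_⟩
  intro x hxmem
  rw [Metric.mem_closedBall] at hxmem
  set d : ℝ := Metric.infDist x S with hddef
  have hd0 : 0 ≤ d := Metric.infDist_nonneg
  have hdle : d ≤ dist x xbar := Metric.infDist_le_dist_of_mem hxS
  have hfx : f xbar ≤ f x := (hBsub x (by linarith)).2
  by_contra hcon
  push_neg at hcon
  -- d > 0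
  have hdpos : 0 < d := by
    rcases lt_or_eq_of_le hd0 with h | h
    · exact h
    · exfalso
      rw [← h, zero_pow (by omega : r ≠ 0)] at hcon
      simp at hcon
      linarith
  set κ : ℝ := 2 * (c / 2 ^ (r + 1)) * d ^ (r - 1) with hκdef
  have hκpos : 0 < κ := by positivity
  -- minimize the penalized function on the closed ball of radius ρ
  set g : EuclideanSpace ℝ (Fin n) → ℝ := fun z => f z + κ * dist z x with hgdef
  have hgcont : ContinuousOn g (Metric.closedBall xbar ρ) := by
    apply ContinuousOn.add
    · exact hf.continuousOn.mono fun z hz => (hBsub z (Metric.mem_closedBall.mp hz)).1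
    · exact (continuous_const.mul (continuous_id.dist continuous_const)).continuousOn
  obtain ⟨y, hymem, hymin⟩ := (isCompact_closedBall xbar ρ).exists_isMinOn
    ⟨x, Metric.mem_closedBall.mpr (by linarith)⟩ hgcont
  have hyV : y ∈ V := (hBsub y (Metric.mem_closedBall.mp hymem)).1
  have hfy : f xbar ≤ f y := (hBsub y (Metric.mem_closedBall.mp hymem)).2
  -- g y ≤ g x gives an estimate on dist y x
  have hgx : f y + κ * dist y x ≤ f x + κ * dist x x :=
    hymin (Metric.mem_closedBall.mpr (by linarith : dist x xbar ≤ ρ))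
  rw [dist_self, mul_zero, add_zero] at hgx
  have hdr : d ^ r = d ^ (r - 1) * d := by
    rw [← pow_succ]
    congr 1
    omega
  have hdist_yx : dist y x < d / 2 := by
    have h1 : κ * dist y x ≤ f x - f y := by linarith
    have h2 : f x - f y < c / 2 ^ (r + 1) * d ^ r := by linarith
    have h3 : κ * dist y x < c / 2 ^ (r + 1) * d ^ r := lt_of_le_of_lt h1 h2
    rw [hdr, hκdef] at h3
    nlinarith [dist_nonneg (x := y) (y := x), pow_pos hdpos (r - 1)]
  have hyρ : dist y xbar < ρ := by
    calc dist y xbar ≤ dist y x + dist x xbar := dist_triangle _ _ _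
      _ < d / 2 + ρ / 2 := by linarith
      _ ≤ (ρ / 2) / 2 + ρ / 2 := by linarith
      _ < ρ := by linarith
  -- y is a local min of z ↦ f z + κ ‖z - y‖
  have hlocal : ∀ z ∈ Metric.ball y (ρ - dist y xbar), f y ≤ f z + κ * ‖z - y‖ := by
    intro z hz
    rw [Metric.mem_ball] at hz
    have hzB : z ∈ Metric.closedBall xbar ρ := by
      rw [Metric.mem_closedBall]
      calc dist z xbar ≤ dist z y + dist y xbar := dist_triangle _ _ _
        _ ≤ ρ := by linarith
    have hzy : f y + κ * dist y x ≤ f z + κ * dist z x := hymin hzB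
    have htri : dist z x ≤ dist z y + dist y x := dist_triangle _ _ _
    rw [← dist_eq_norm]
    nlinarith [hκpos, hzy]
  have hgle : ‖gradient f y‖ ≤ κ :=
    aux_norm_gradient_le hκpos (hdiff y hyV) (by linarith) hlocal
  -- gradient lower bound at y
  have hyδ : y ∈ Metric.closedBall xbar δ := Metric.mem_closedBall.mpr (by linarith)
  have hinf_y : d / 2 < Metric.infDist y S := by
    have := Metric.infDist_le_infDist_add_dist (x := x) (y := y) (s := S)
    rw [dist_comm] at this
    linarith
  have hmono : (d / 2) ^ (r - 1) ≤ Metric.infDist y S ^ (r - 1) :=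
    pow_le_pow_left₀ (by linarith) hinf_y.le _
  have hchain : c * (d / 2) ^ (r - 1) ≤ κ :=
    le_trans (by nlinarith [hgrad y hyδ]) hgle
  -- contradiction
  have hq : (0:ℝ) < 2 ^ (r - 1) := by positivity
  have h2r : (2:ℝ) ^ (r + 1) = 4 * 2 ^ (r - 1) := by
    have : r + 1 = (r - 1) + 2 := by omega
    rw [this, pow_add]
    ring
  rw [div_pow, hκdef, h2r] at hchain
  have hp : (0:ℝ) < d ^ (r - 1) := pow_pos hdpos _
  have hcp : (0:ℝ) < c * d ^ (r - 1) := mul_pos hc hp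

  have h6 : c * (d ^ (r - 1) / 2 ^ (r - 1)) = c * d ^ (r - 1) / 2 ^ (r - 1) := by ring
  have h7 : 2 * (c / (4 * 2 ^ (r - 1))) * d ^ (r - 1)
      = c * d ^ (r - 1) / (2 * 2 ^ (r - 1)) := by
    field_simp
    ring
  rw [h6, h7, div_le_div_iff₀ hq (by positivity)] at hchain
  nlinarith [mul_pos hcp hq, hchain]
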